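/- arXiv:1701.00020 — 3 statements merged into one kernel-verified Lean document; each statement's English description precedes it below -/
import Mathlib

section
/- Let (ρ, U) be a natural right absorber in a Hilbert space tensor category C. Then for every object x, the unitary U^x ∈ U(H^x ⊗ H^ρ) satisfies U^x₁₂ U^x₁₃ U^ρ₂₃ = U^ρ₂₃ U^x₁₂ on H^x⊗H^ρ⊗H^ρ; in particular (x = ρ), U^ρ satisfies the pentagon equation and hence is a multiplicative unitary. -/
noncomputable section
open scoped TensorProduct

namespace MU

variable {A B M R : Type*}
  [AddCommMonoid A] [Module ℂ A] [AddCommMonoid B] [Module ℂ B]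
  [AddCommMonoid M] [Module ℂ M] [AddCommMonoid R] [Module ℂ R]

/-- Extend an endomorphism of `A ⊗ B` to `A ⊗ (B ⊗ R)`, acting trivially on the tail `R`.
This realises the leg numbering `T₁₂`. -/
def endTail (T : (A ⊗[ℂ] B) ≃ₗ[ℂ] (A ⊗[ℂ] B)) :
    (A ⊗[ℂ] (B ⊗[ℂ] R)) ≃ₗ[ℂ] (A ⊗[ℂ] (B ⊗[ℂ] R)) :=
  (TensorProduct.assoc ℂ A B R).symm ≪≫ₗ
    TensorProduct.congr T (LinearEquiv.refl ℂ R) ≪≫ₗ TensorProduct.assoc ℂ A B R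

/-- Exchange the first tensor factor with the second one. -/
def exch : (A ⊗[ℂ] (B ⊗[ℂ] M)) ≃ₗ[ℂ] (B ⊗[ℂ] (A ⊗[ℂ] M)) :=
  (TensorProduct.assoc ℂ A B M).symm ≪≫ₗ
    TensorProduct.congr (TensorProduct.comm ℂ A B) (LinearEquiv.refl ℂ M) ≪≫ₗ
    TensorProduct.assoc ℂ B A M

/-- Let an endomorphism of `A ⊗ M` act on `A ⊗ (B ⊗ M)`, skipping the middle leg `B`. -/
def stepMid (T : (A ⊗[ℂ] M) ≃ₗ[ℂ] (A ⊗[ℂ] M)) :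
    (A ⊗[ℂ] (B ⊗[ℂ] M)) ≃ₗ[ℂ] (A ⊗[ℂ] (B ⊗[ℂ] M)) :=
  exch ≪≫ₗ TensorProduct.congr (LinearEquiv.refl ℂ B) T ≪≫ₗ exch

/-- Let an endomorphism of `M` act on `A ⊗ M`, acting trivially on the new leftmost leg. -/
def extL (T : M ≃ₗ[ℂ] M) : (A ⊗[ℂ] M) ≃ₗ[ℂ] (A ⊗[ℂ] M) :=
  TensorProduct.congr (LinearEquiv.refl ℂ A) T

end MU

universe u

/-- A (strict) Hilbert space tensor category, encoded concretely: objects are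
ℂ-modules equipped with an extra structure `S`, arrows are the linear maps
satisfying the predicate `IsHom`, the monoidal structure is induced by the tensor
product of the underlying spaces (so the forgetful functor is strict monoidal), and
`triv` is the strict monoidal section `τ` equipping a space with the trivial
structure (every linear map is an arrow between trivial objects). -/
structure HSTC : Type (u + 1) where
  /-- the extra structure making a ℂ-module into an object of the category -/
  S : ∀ (X : Type u) [AddCommGroup X] [Module ℂ X], Type u
  /-- the arrows of the category, as a predicate on linear maps -/
  IsHom : ∀ {X Y : Type u} [AddCommGroup X] [Module ℂ X] [AddCommGroup Y] [Module ℂ Y],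
    S X → S Y → (X →ₗ[ℂ] Y) → Prop
  isHom_id : ∀ {X : Type u} [AddCommGroup X] [Module ℂ X] (s : S X),
    IsHom s s LinearMap.id
  isHom_comp : ∀ {X Y Z : Type u} [AddCommGroup X] [Module ℂ X] [AddCommGroup Y]
    [Module ℂ Y] [AddCommGroup Z] [Module ℂ Z] (s : S X) (t : S Y) (u : S Z)
    (f : X →ₗ[ℂ] Y) (g : Y →ₗ[ℂ] Z), IsHom s t f → IsHom t u g → IsHom s u (g ∘ₗ f)
  /-- the tensor product of objects -/
  tenS : ∀ {X Y : Type u} [AddCommGroup X] [Module ℂ X] [AddCommGroup Y] [Module ℂ Y],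
    S X → S Y → S (X ⊗[ℂ] Y)
  /-- the trivial structure: the strict monoidal functor `τ : Hilb → C` -/
  triv : ∀ (X : Type u) [AddCommGroup X] [Module ℂ X], S X
  /-- every bounded linear map is an arrow between trivial objects -/
  triv_isHom : ∀ {X Y : Type u} [AddCommGroup X] [Module ℂ X] [AddCommGroup Y]
    [Module ℂ Y] (f : X →ₗ[ℂ] Y), IsHom (triv X) (triv Y) f
  /-- the tensor product of arrows is an arrow -/
  ten_isHom : ∀ {X X' Y Y' : Type u} [AddCommGroup X] [Module ℂ X] [AddCommGroup X']
    [Module ℂ X'] [AddCommGroup Y] [Module ℂ Y] [AddCommGroup Y'] [Module ℂ Y']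
    (s : S X) (s' : S X') (t : S Y) (t' : S Y') (f : X →ₗ[ℂ] X') (g : Y →ₗ[ℂ] Y'),
    IsHom s s' f → IsHom t t' g → IsHom (tenS s t) (tenS s' t') (TensorProduct.map f g)
  /-- `τ` is a strict tensor functor -/
  triv_tenS : ∀ (X Y : Type u) [AddCommGroup X] [Module ℂ X] [AddCommGroup Y]
    [Module ℂ Y], tenS (triv X) (triv Y) = triv (X ⊗[ℂ] Y)
  /-- the associators of the category are mapped to the canonical ones -/
  assoc_isHom : ∀ {X Y Z : Type u} [AddCommGroup X] [Module ℂ X] [AddCommGroup Y]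
    [Module ℂ Y] [AddCommGroup Z] [Module ℂ Z] (s : S X) (t : S Y) (u : S Z),
    IsHom (tenS (tenS s t) u) (tenS s (tenS t u))
      (TensorProduct.assoc ℂ X Y Z).toLinearMap
  assoc_symm_isHom : ∀ {X Y Z : Type u} [AddCommGroup X] [Module ℂ X] [AddCommGroup Y]
    [Module ℂ Y] [AddCommGroup Z] [Module ℂ Z] (s : S X) (t : S Y) (u : S Z),
    IsHom (tenS s (tenS t u)) (tenS (tenS s t) u)
      ((TensorProduct.assoc ℂ X Y Z).symm : X ⊗[ℂ] (Y ⊗[ℂ] Z) →ₗ[ℂ] (X ⊗[ℂ] Y) ⊗[ℂ] Z)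
  /-- the flip over a trivial object comes from an arrow (Lemma 2.5 of the paper) -/
  flip_triv_isHom : ∀ {X Y : Type u} [AddCommGroup X] [Module ℂ X] [AddCommGroup Y]
    [Module ℂ Y] (s : S X),
    IsHom (tenS s (triv Y)) (tenS (triv Y) s) (TensorProduct.comm ℂ X Y).toLinearMap

/-- A natural right absorber `(ρ, (Uˣ)ₓ)` in a Hilbert space tensor category `C`:
unitaries `Uˣ : x ⊗ ρ → τ(x) ⊗ ρ` (described on the underlying spaces, where both
objects have underlying space `X ⊗ R`), natural in `x`, and multiplicative:
`U^{x₁ ⊗ x₂} = U^{x₁}₁₃ U^{x₂}₂₃`. -/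
structure NRA (C : HSTC.{u}) (R : Type u) [AddCommGroup R] [Module ℂ R] where
  /-- the structure of the absorbing object `ρ` on the space `R` -/
  sρ : C.S R
  /-- the absorbing unitaries `Uˣ`, at the level of the underlying spaces -/
  U : ∀ (X : Type u) [AddCommGroup X] [Module ℂ X], C.S X →
    ((X ⊗[ℂ] R) ≃ₗ[ℂ] (X ⊗[ℂ] R))
  /-- each `Uˣ` is an arrow `x ⊗ ρ → τ(x) ⊗ ρ` in `C` -/
  U_isHom : ∀ (X : Type u) [AddCommGroup X] [Module ℂ X] (s : C.S X),
    C.IsHom (C.tenS s sρ) (C.tenS (C.triv X) sρ) (U X s).toLinearMap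
  /-- naturality of the `Uˣ` -/
  U_natural : ∀ {X Y : Type u} [AddCommGroup X] [Module ℂ X] [AddCommGroup Y]
    [Module ℂ Y] (s : C.S X) (t : C.S Y) (a : X →ₗ[ℂ] Y), C.IsHom s t a →
    TensorProduct.map a LinearMap.id ∘ₗ (U X s).toLinearMap
      = (U Y t).toLinearMap ∘ₗ TensorProduct.map a LinearMap.id
  /-- multiplicativity: `U^{x₁ ⊗ x₂} = U^{x₁}₁₃ U^{x₂}₂₃` -/
  U_mult : ∀ (X Y : Type u) [AddCommGroup X] [Module ℂ X] [AddCommGroup Y]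
    [Module ℂ Y] (s : C.S X) (t : C.S Y),
    U (X ⊗[ℂ] Y) (C.tenS s t)
      = TensorProduct.assoc ℂ X Y R ≪≫ₗ MU.extL (U Y t) ≪≫ₗ MU.stepMid (U X s) ≪≫ₗ
          (TensorProduct.assoc ℂ X Y R).symm

namespace AbsorberAux

open MU TensorProduct

variable {C : HSTC.{u}} {R : Type u} [AddCommGroup R] [Module ℂ R]

/-- Contract the first tensor factor using a functional. -/
def ctr {X Z : Type u} [AddCommGroup X] [Module ℂ X] [AddCommGroup Z] [Module ℂ Z]
    (f : X →ₗ[ℂ] ℂ) : (X ⊗[ℂ] Z) →ₗ[ℂ] Z :=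
  (TensorProduct.lid ℂ Z).toLinearMap ∘ₗ LinearMap.rTensor Z f

@[simp] lemma ctr_tmul {X Z : Type u} [AddCommGroup X] [Module ℂ X] [AddCommGroup Z]
    [Module ℂ Z] (f : X →ₗ[ℂ] ℂ) (x : X) (z : Z) : ctr f (x ⊗ₜ[ℂ] z) = f x • z := by
  simp [ctr]

/-- Naturality of `U` on trivial objects, pointwise. -/
lemma nat (A : NRA C R) {X Y : Type u} [AddCommGroup X] [Module ℂ X] [AddCommGroup Y]
    [Module ℂ Y] (a : X →ₗ[ℂ] Y) (w : X ⊗[ℂ] R) :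
    TensorProduct.map a LinearMap.id (A.U X (C.triv X) w)
      = A.U Y (C.triv Y) (TensorProduct.map a LinearMap.id w) := by
  have h := A.U_natural (C.triv X) (C.triv Y) a (C.triv_isHom a)
  exact congrArg (fun g : (X ⊗[ℂ] R) →ₗ[ℂ] (Y ⊗[ℂ] R) => g w) h

/-- The candidate "right leg" operator. -/
def mm (A : NRA C R) {X : Type u} [AddCommGroup X] [Module ℂ X] (ξ : X)
    (f : X →ₗ[ℂ] ℂ) : R →ₗ[ℂ] R :=
  ctr f ∘ₗ (A.U X (C.triv X)).toLinearMap ∘ₗ TensorProduct.mk ℂ X R ξ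

lemma stepA (A : NRA C R) {X : Type u} [AddCommGroup X] [Module ℂ X] (ξ : X)
    (f : X →ₗ[ℂ] ℂ) (hf : f ξ = 1) (r : R) :
    A.U X (C.triv X) (ξ ⊗ₜ[ℂ] r) = ξ ⊗ₜ[ℂ] (mm A ξ f r) := by
  set V := A.U X (C.triv X) with hV
  set w := V (ξ ⊗ₜ[ℂ] r) with hw
  -- j x = x ⊗ ξ, k y = ξ ⊗ y
  set j : X →ₗ[ℂ] X ⊗[ℂ] X := (TensorProduct.mk ℂ X X).flip ξ with hj
  set k : X →ₗ[ℂ] X ⊗[ℂ] X := TensorProduct.mk ℂ X X ξ with hk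
  have h1 : TensorProduct.map j LinearMap.id w = TensorProduct.map k LinearMap.id w := by
    have hjj : TensorProduct.map j LinearMap.id (ξ ⊗ₜ[ℂ] r) = (ξ ⊗ₜ[ℂ] ξ) ⊗ₜ[ℂ] r := by
      simp [hj]
    have hkk : TensorProduct.map k LinearMap.id (ξ ⊗ₜ[ℂ] r) = (ξ ⊗ₜ[ℂ] ξ) ⊗ₜ[ℂ] r := by
      simp [hk]
    rw [hw, nat A j, nat A k, hjj, hkk]
  -- apply the contraction on the first leg of X ⊗ X
  have hq : LinearMap.rTensor R (ctr f) ∘ₗ TensorProduct.map j LinearMap.id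
      = TensorProduct.map (f.smulRight ξ) LinearMap.id := by
    apply TensorProduct.ext'
    intro x r'
    simp [hj]
  have hq' : LinearMap.rTensor R (ctr f) ∘ₗ TensorProduct.map k LinearMap.id
      = LinearMap.id := by
    apply TensorProduct.ext'
    intro x r'
    simp [hk, hf]
  have h2 : TensorProduct.map (f.smulRight ξ) LinearMap.id w = w := by
    have := congrArg (LinearMap.rTensor R (ctr f)) h1
    rw [← LinearMap.comp_apply, ← LinearMap.comp_apply, hq, hq'] at this
    simpa using this
  have h3 : ∀ u : X ⊗[ℂ] R,
      TensorProduct.map (f.smulRight ξ) LinearMap.id u = ξ ⊗ₜ[ℂ] ctr f u := by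
    have : TensorProduct.map (f.smulRight ξ) LinearMap.id
        = TensorProduct.mk ℂ X R ξ ∘ₗ ctr f := by
      apply TensorProduct.ext'
      intro x r'
      simp [TensorProduct.smul_tmul, TensorProduct.tmul_smul]
    intro u; rw [this]; rfl
  exact h2.symm.trans (h3 w)

lemma stepB (A : NRA C R) {X Y : Type u} [AddCommGroup X] [Module ℂ X] [AddCommGroup Y]
    [Module ℂ Y] (ξ : X) (η : Y) (f : X →ₗ[ℂ] ℂ) (g : Y →ₗ[ℂ] ℂ)
    (hf : f ξ = 1) (hg : g η = 1) : mm A ξ f = mm A η g := by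
  ext r
  set a : X →ₗ[ℂ] Y := f.smulRight η with ha
  have h := nat A a (ξ ⊗ₜ[ℂ] r)
  rw [stepA A ξ f hf r] at h
  have hax : TensorProduct.map a LinearMap.id (ξ ⊗ₜ[ℂ] r) = η ⊗ₜ[ℂ] r := by
    simp [ha, hf]
  rw [hax, stepA A η g hg r] at h
  have hL : TensorProduct.map a LinearMap.id (ξ ⊗ₜ[ℂ] mm A ξ f r)
      = η ⊗ₜ[ℂ] mm A ξ f r := by simp [ha, hf]
  rw [hL] at h
  have := congrArg (ctr g) h
  simpa [hg] using this

@[simp] lemma exch_tmul {A' B' M' : Type*} [AddCommMonoid A'] [Module ℂ A']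
    [AddCommMonoid B'] [Module ℂ B'] [AddCommMonoid M'] [Module ℂ M']
    (a : A') (b : B') (m : M') :
    (exch : (A' ⊗[ℂ] (B' ⊗[ℂ] M')) ≃ₗ[ℂ] _) (a ⊗ₜ (b ⊗ₜ m)) = b ⊗ₜ (a ⊗ₜ m) := by
  simp [MU.exch]

lemma stepC (A : NRA C R) {X : Type u} [AddCommGroup X] [Module ℂ X] (ξ : X)
    (f : X →ₗ[ℂ] ℂ) (hf : f ξ = 1) (r : R) :
    mm A ξ f (mm A ξ f r) = mm A ξ f r := by
  set h : (X ⊗[ℂ] X) →ₗ[ℂ] ℂ :=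
    (TensorProduct.lid ℂ ℂ).toLinearMap ∘ₗ TensorProduct.map f f with hhdef
  have hh : h (ξ ⊗ₜ[ℂ] ξ) = 1 := by simp [hhdef, hf]
  have E := A.U_mult X X (C.triv X) (C.triv X)
  rw [C.triv_tenS] at E
  have E' := congrArg (fun (e : ((X ⊗[ℂ] X) ⊗[ℂ] R) ≃ₗ[ℂ] _) => e ((ξ ⊗ₜ[ℂ] ξ) ⊗ₜ[ℂ] r)) E
  simp only [LinearEquiv.trans_apply] at E'
  rw [stepA A (ξ ⊗ₜ[ℂ] ξ) h hh r] at E'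
  rw [TensorProduct.assoc_tmul] at E'
  have e1 : (extL (A.U X (C.triv X)) : (X ⊗[ℂ] (X ⊗[ℂ] R)) ≃ₗ[ℂ] _) (ξ ⊗ₜ (ξ ⊗ₜ r))
      = ξ ⊗ₜ (ξ ⊗ₜ (mm A ξ f r)) := by
    simp [MU.extL, stepA A ξ f hf r]
  rw [e1] at E'
  have e2 : (stepMid (A.U X (C.triv X)) : (X ⊗[ℂ] (X ⊗[ℂ] R)) ≃ₗ[ℂ] _)
      (ξ ⊗ₜ (ξ ⊗ₜ (mm A ξ f r))) = ξ ⊗ₜ (ξ ⊗ₜ (mm A ξ f (mm A ξ f r))) := by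
    simp [MU.stepMid, stepA A ξ f hf (mm A ξ f r)]
  rw [e2, TensorProduct.assoc_symm_tmul] at E'
  have hmm : mm A (ξ ⊗ₜ[ℂ] ξ) h = mm A ξ f := stepB A (ξ ⊗ₜ[ℂ] ξ) ξ h f hh hf
  rw [hmm] at E'
  have := congrArg (ctr h) E'
  simp only [ctr_tmul, hh, one_smul] at this
  exact this.symm

lemma trivU (A : NRA C R) (X : Type u) [AddCommGroup X] [Module ℂ X] :
    A.U X (C.triv X) = LinearEquiv.refl ℂ (X ⊗[ℂ] R) := by
  apply LinearEquiv.ext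
  intro w
  simp only [LinearEquiv.refl_apply]
  induction w using TensorProduct.induction_on with
  | zero => simp
  | add u v hu hv => rw [map_add, hu, hv]
  | tmul x r =>
    by_cases hx : x = 0
    · subst hx; rw [TensorProduct.zero_tmul]; simp
    · obtain ⟨φ, hφ⟩ : ∃ φ : Module.Dual ℂ X, φ x ≠ 0 := by
        by_contra hcon
        push_neg at hcon
        exact hx ((Module.forall_dual_apply_eq_zero_iff ℂ x).mp hcon)
      set f : X →ₗ[ℂ] ℂ := (φ x)⁻¹ • φ with hfdef
      have hf : f x = 1 := by
        simp only [hfdef, LinearMap.smul_apply, smul_eq_mul]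
        exact inv_mul_cancel₀ hφ
      rw [stepA A x f hf r]
      congr 1
      -- show mm A x f r = r
      have hidem := stepC A x f hf
      have hker : mm A x f (mm A x f r - r) = 0 := by
        rw [map_sub, hidem, sub_self]
      have hZ : A.U X (C.triv X) (x ⊗ₜ[ℂ] (mm A x f r - r)) = 0 := by
        rw [stepA A x f hf (mm A x f r - r), hker, TensorProduct.tmul_zero]
      have hz : x ⊗ₜ[ℂ] (mm A x f r - r) = (0 : X ⊗[ℂ] R) := by
        apply (A.U X (C.triv X)).injective
        rw [hZ, map_zero]
      have h0 := congrArg (ctr f) hz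
      simp only [ctr_tmul, hf, one_smul, map_zero] at h0
      rw [sub_eq_zero] at h0
      exact h0

lemma stepMid_refl {A' B' M' : Type*} [AddCommMonoid A'] [Module ℂ A']
    [AddCommMonoid B'] [Module ℂ B'] [AddCommMonoid M'] [Module ℂ M'] :
    (stepMid (LinearEquiv.refl ℂ (A' ⊗[ℂ] M'))
      : (A' ⊗[ℂ] (B' ⊗[ℂ] M')) ≃ₗ[ℂ] _) = LinearEquiv.refl ℂ _ := by
  apply LinearEquiv.ext
  intro w
  simp only [LinearEquiv.refl_apply]
  induction w using TensorProduct.induction_on with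
  | zero => simp
  | add u v hu hv => rw [map_add, hu, hv]
  | tmul a w' =>
    induction w' using TensorProduct.induction_on with
    | zero => simp
    | add u v hu hv => rw [TensorProduct.tmul_add, map_add, hu, hv]
    | tmul b m => simp [MU.stepMid]

lemma endTail_apply {A' B' M' : Type*} [AddCommMonoid A'] [Module ℂ A']
    [AddCommMonoid B'] [Module ℂ B'] [AddCommMonoid M'] [Module ℂ M']
    (T : (A' ⊗[ℂ] B') ≃ₗ[ℂ] (A' ⊗[ℂ] B')) (w : A' ⊗[ℂ] (B' ⊗[ℂ] M')) :
    (endTail T : (A' ⊗[ℂ] (B' ⊗[ℂ] M')) ≃ₗ[ℂ] _) w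
      = TensorProduct.assoc ℂ A' B' M'
          (TensorProduct.map T.toLinearMap LinearMap.id
            ((TensorProduct.assoc ℂ A' B' M').symm w)) := by
  rfl

lemma claim (A : NRA C R) (X : Type u) [AddCommGroup X] [Module ℂ X] (s : C.S X) :
    endTail (A.U X s) * stepMid (A.U X s) * extL (A.U R A.sρ)
      = extL (A.U R A.sρ) * endTail (A.U X s) := by
  set Ux := A.U X s with hUx
  set W := A.U R A.sρ with hW
  set α := TensorProduct.assoc ℂ X R R with hα
  apply LinearEquiv.ext
  intro v
  show (endTail Ux) ((stepMid Ux) ((extL W) v)) = (extL W) ((endTail Ux) v)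
  -- f1 : stepMid Ux (extL W v) = α (U_{x⊗ρ} (α.symm v))
  have E := A.U_mult X R s A.sρ
  have f1 : (stepMid Ux : (X ⊗[ℂ] (R ⊗[ℂ] R)) ≃ₗ[ℂ] _) ((extL W) v)
      = α (A.U (X ⊗[ℂ] R) (C.tenS s A.sρ) (α.symm v)) := by
    rw [E]
    simp only [LinearEquiv.trans_apply, LinearEquiv.apply_symm_apply, hα, hUx, hW]
  rw [f1, endTail_apply]
  rw [LinearEquiv.symm_apply_apply]
  -- naturality at a = Ux
  have hnat := A.U_natural (C.tenS s A.sρ) (C.tenS (C.triv X) A.sρ)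
    Ux.toLinearMap (A.U_isHom X s)
  have f2 : TensorProduct.map Ux.toLinearMap LinearMap.id
        (A.U (X ⊗[ℂ] R) (C.tenS s A.sρ) (α.symm v))
      = A.U (X ⊗[ℂ] R) (C.tenS (C.triv X) A.sρ)
        (TensorProduct.map Ux.toLinearMap LinearMap.id (α.symm v)) := by
    exact congrArg (fun g : ((X ⊗[ℂ] R) ⊗[ℂ] R) →ₗ[ℂ] ((X ⊗[ℂ] R) ⊗[ℂ] R) =>
      g (α.symm v)) hnat
  rw [f2]
  -- f3 : the trivial absorber identity
  have E2 := A.U_mult X R (C.triv X) A.sρ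
  rw [trivU A X, stepMid_refl] at E2
  have f3 : ∀ u : (X ⊗[ℂ] R) ⊗[ℂ] R,
      A.U (X ⊗[ℂ] R) (C.tenS (C.triv X) A.sρ) u = α.symm ((extL W) (α u)) := by
    intro u
    rw [E2]
    simp only [LinearEquiv.trans_apply, LinearEquiv.refl_apply, hα, hW]
  rw [f3, LinearEquiv.apply_symm_apply, endTail_apply]

end AbsorberAux


open MU in
/-- for a natural right absorber `(ρ, U)` in a Hilbert space tensor
category, every `Uˣ` satisfies `Uˣ₁₂ Uˣ₁₃ Uᵖ₂₃ = Uᵖ₂₃ Uˣ₁₂` on `Hˣ ⊗ Hᵖ ⊗ Hᵖ`;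
in particular (`x = ρ`) the unitary `Uᵖ` satisfies the pentagon equation, hence is a
multiplicative unitary, and each `Uˣ` is a right representation of it. -/
theorem absorber_gives_multiplicative_unitary
    (C : HSTC.{u}) {R : Type u} [AddCommGroup R] [Module ℂ R] (A : NRA C R)
    (X : Type u) [AddCommGroup X] [Module ℂ X] (s : C.S X) :
    (endTail (A.U X s) * stepMid (A.U X s) * extL (A.U R A.sρ)
        = extL (A.U R A.sρ) * endTail (A.U X s))
      ∧ (endTail (A.U R A.sρ) * stepMid (A.U R A.sρ) * extL (A.U R A.sρ)
        = extL (A.U R A.sρ) * endTail (A.U R A.sρ)) := by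
  exact ⟨AbsorberAux.claim A X s, AbsorberAux.claim A R A.sρ⟩
end
end

section
/- Let (ρ,(U^x)) and (ρ̌,(Ǔ^x)) be two natural right absorbers in the same Hilbert space tensor category, with associated multiplicative unitaries U = U^ρ, Ǔ = Ǔ^{ρ̌}, and set V := U^{ρ̌}, W := Ǔ^ρ. Then the following six pentagon-like equations hold: U₂₃V₁₂ = V₁₂V₁₃U₂₃, Ǔ₂₃W₁₂ = W₁₂W₁₃Ǔ₂₃, V₂₃Ǔ₁₂ = Ǔ₁₂V₁₃V₂₃, W₂₃U₁₂ = U₁₂W₁₃W₂₃, V₂₃W₁₂ = W₁₂U₁₃V₂₃, and W₂₃V₁₂ = V₁₂Ǔ₁₃W₂₃. -/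
noncomputable section
open scoped TensorProduct

universe u

section AuxPentagon

open MU TensorProduct

/-- `exch` on elementary tensors. -/
theorem MU.exch_tmul {A B M : Type*} [AddCommMonoid A] [Module ℂ A] [AddCommMonoid B]
    [Module ℂ B] [AddCommMonoid M] [Module ℂ M] (x : A) (y : B) (m : M) :
    (MU.exch (x ⊗ₜ[ℂ] (y ⊗ₜ[ℂ] m))) = y ⊗ₜ[ℂ] (x ⊗ₜ[ℂ] m) := by
  simp [MU.exch]

/-- `stepMid` of the identity is the identity. -/
theorem MU.stepMid_refl {A B M : Type*} [AddCommMonoid A] [Module ℂ A] [AddCommMonoid B]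
    [Module ℂ B] [AddCommMonoid M] [Module ℂ M] :
    MU.stepMid (B := B) (LinearEquiv.refl ℂ (A ⊗[ℂ] M))
      = LinearEquiv.refl ℂ (A ⊗[ℂ] (B ⊗[ℂ] M)) := by
  apply LinearEquiv.toLinearMap_injective
  apply TensorProduct.ext'
  intro x q
  induction q using TensorProduct.induction_on with
  | zero => simp [tmul_zero]
  | tmul y m => simp [MU.stepMid, MU.exch_tmul]
  | add q₁ q₂ h₁ h₂ =>
      simp only [tmul_add, map_add] at h₁ h₂ ⊢
      rw [h₁, h₂]

variable {C : HSTC.{u}} {R : Type u} [AddCommGroup R] [Module ℂ R]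

/-- The absorbing unitary of a trivial object is the identity. -/
theorem NRA.U_triv (A : NRA C R) (X : Type u) [AddCommGroup X] [Module ℂ X] :
    A.U X (C.triv X) = LinearEquiv.refl ℂ (X ⊗[ℂ] R) := by
  classical
  set K : Type u := ULift.{u, 0} ℂ with hK
  set e : (K ⊗[ℂ] R) ≃ₗ[ℂ] R :=
    TensorProduct.congr ULift.moduleEquiv (LinearEquiv.refl ℂ R) ≪≫ₗ TensorProduct.lid ℂ R
    with he_def
  set T : R ≃ₗ[ℂ] R := e.symm ≪≫ₗ A.U K (C.triv K) ≪≫ₗ e with hT_def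
  have he_symm : ∀ r : R, e.symm r = (⟨1⟩ : K) ⊗ₜ[ℂ] r := by
    intro r
    simp [he_def, ULift.moduleEquiv]
    rfl
  have h1 : ∀ r : R, A.U K (C.triv K) ((⟨1⟩ : K) ⊗ₜ[ℂ] r) = (⟨1⟩ : K) ⊗ₜ[ℂ] (T r) := by
    intro r
    have : A.U K (C.triv K) (e.symm r) = e.symm (T r) := by
      rw [hT_def]
      simp only [LinearEquiv.trans_apply]
      rw [e.symm_apply_apply]
    rw [he_symm r, he_symm (T r)] at this
    exact this
  have stepA : ∀ (Z : Type u) [AddCommGroup Z] [Module ℂ Z],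
      (A.U Z (C.triv Z)).toLinearMap
        = TensorProduct.map LinearMap.id T.toLinearMap := by
    intro Z _ _
    apply TensorProduct.ext'
    intro ξ r
    set a : K →ₗ[ℂ] Z :=
      LinearMap.toSpanSingleton ℂ Z ξ ∘ₗ (ULift.moduleEquiv (R := ℂ) (M := ℂ)).toLinearMap
      with ha_def
    have ha1 : a ⟨1⟩ = ξ := by
      simp [ha_def, LinearMap.toSpanSingleton_apply, ULift.moduleEquiv]
      exact one_smul ℂ ξ
    have hnat := A.U_natural (C.triv K) (C.triv Z) a (C.triv_isHom a)
    have := LinearMap.congr_fun hnat ((⟨1⟩ : K) ⊗ₜ[ℂ] r)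
    simp only [LinearMap.comp_apply, LinearEquiv.coe_coe, TensorProduct.map_tmul,
      LinearMap.id_coe, id_eq, ha1, h1 r] at this
    simp only [TensorProduct.map_tmul, LinearMap.id_coe, id_eq, LinearEquiv.coe_coe]
    exact this.symm
  -- idempotence of T
  have hTT : ∀ r : R, T (T r) = T r := by
    intro r
    have hm := A.U_mult K K (C.triv K) (C.triv K)
    rw [C.triv_tenS] at hm
    have h₂ := DFunLike.congr_fun hm ((((⟨1⟩ : K) ⊗ₜ[ℂ] (⟨1⟩ : K))) ⊗ₜ[ℂ] r)
    have hL : A.U (K ⊗[ℂ] K) (C.triv (K ⊗[ℂ] K)) ((((⟨1⟩ : K) ⊗ₜ[ℂ] (⟨1⟩ : K))) ⊗ₜ[ℂ] r)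
        = (((⟨1⟩ : K) ⊗ₜ[ℂ] (⟨1⟩ : K))) ⊗ₜ[ℂ] (T r) := by
      have := LinearMap.congr_fun (stepA (K ⊗[ℂ] K)) ((((⟨1⟩ : K) ⊗ₜ[ℂ] (⟨1⟩ : K))) ⊗ₜ[ℂ] r)
      simpa using this
    rw [hL] at h₂
    simp only [LinearEquiv.trans_apply, TensorProduct.assoc_tmul] at h₂
    rw [show (MU.extL (A.U K (C.triv K)) ((⟨1⟩ : K) ⊗ₜ[ℂ] ((⟨1⟩ : K) ⊗ₜ[ℂ] r)))
          = (⟨1⟩ : K) ⊗ₜ[ℂ] ((⟨1⟩ : K) ⊗ₜ[ℂ] (T r)) by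
        simp [MU.extL, h1 r]] at h₂
    rw [show (MU.stepMid (A.U K (C.triv K)) ((⟨1⟩ : K) ⊗ₜ[ℂ] ((⟨1⟩ : K) ⊗ₜ[ℂ] (T r))))
          = (⟨1⟩ : K) ⊗ₜ[ℂ] ((⟨1⟩ : K) ⊗ₜ[ℂ] (T (T r))) by
        simp [MU.stepMid, MU.exch_tmul, h1 (T r)]] at h₂
    rw [TensorProduct.assoc_symm_tmul] at h₂
    -- extract the last leg
    set ψ : (K ⊗[ℂ] K) →ₗ[ℂ] ℂ :=
      (TensorProduct.lid ℂ ℂ).toLinearMap ∘ₗ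
        TensorProduct.map (ULift.moduleEquiv (R := ℂ) (M := ℂ)).toLinearMap
          (ULift.moduleEquiv (R := ℂ) (M := ℂ)).toLinearMap with hψ
    have hψ1 : ψ ((⟨1⟩ : K) ⊗ₜ[ℂ] (⟨1⟩ : K)) = 1 := by
      simp [hψ, ULift.moduleEquiv]
      exact mul_one (1 : ℂ)
    have := congrArg (fun z => (TensorProduct.lid ℂ R)
      (TensorProduct.map ψ LinearMap.id z)) h₂
    simpa [hψ1] using this.symm
  have hT : ∀ r : R, T r = r := by
    intro r
    have := hTT r
    exact T.injective this
  apply LinearEquiv.toLinearMap_injective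
  rw [stepA X]
  apply TensorProduct.ext'
  intro ξ r
  simp [hT r]

/-- The common pentagon-type identity for a natural right absorber `A` and an
arrow `a : x ⊗ y → τ(X) ⊗ y`. -/
theorem NRA.pent (A : NRA C R) {X Y : Type u} [AddCommGroup X] [Module ℂ X]
    [AddCommGroup Y] [Module ℂ Y] (s : C.S X) (t : C.S Y)
    (a : (X ⊗[ℂ] Y) ≃ₗ[ℂ] (X ⊗[ℂ] Y))
    (ha : C.IsHom (C.tenS s t) (C.tenS (C.triv X) t) a.toLinearMap) :
    extL (A.U Y t) * endTail a = endTail a * stepMid (A.U X s) * extL (A.U Y t) := by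
  have hnat := A.U_natural (C.tenS s t) (C.tenS (C.triv X) t) a.toLinearMap ha
  have hm1 := A.U_mult X Y s t
  have hm2 := A.U_mult X Y (C.triv X) t
  rw [A.U_triv X, MU.stepMid_refl] at hm2
  -- pointwise versions
  have P1 : ∀ z : (X ⊗[ℂ] Y) ⊗[ℂ] R,
      TensorProduct.assoc ℂ X Y R (A.U (X ⊗[ℂ] Y) (C.tenS s t) z)
        = stepMid (A.U X s) (extL (A.U Y t) (TensorProduct.assoc ℂ X Y R z)) := by
    intro z
    rw [hm1]
    simp [LinearEquiv.trans_apply]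
  have P2 : ∀ z : (X ⊗[ℂ] Y) ⊗[ℂ] R,
      TensorProduct.assoc ℂ X Y R (A.U (X ⊗[ℂ] Y) (C.tenS (C.triv X) t) z)
        = extL (A.U Y t) (TensorProduct.assoc ℂ X Y R z) := by
    intro z
    rw [hm2]
    simp [LinearEquiv.trans_apply]
  have P3 : ∀ z : (X ⊗[ℂ] Y) ⊗[ℂ] R,
      TensorProduct.map a.toLinearMap LinearMap.id (A.U (X ⊗[ℂ] Y) (C.tenS s t) z)
        = A.U (X ⊗[ℂ] Y) (C.tenS (C.triv X) t)
            (TensorProduct.map a.toLinearMap LinearMap.id z) := by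
    intro z
    have := LinearMap.congr_fun hnat z
    simpa using this
  have P4 : ∀ z : (X ⊗[ℂ] Y) ⊗[ℂ] R,
      endTail a (TensorProduct.assoc ℂ X Y R z)
        = TensorProduct.assoc ℂ X Y R
            (TensorProduct.map a.toLinearMap LinearMap.id z) := by
    intro z
    simp only [MU.endTail, LinearEquiv.trans_apply, LinearEquiv.symm_apply_apply]
    congr 1
  apply LinearEquiv.ext
  intro u
  have hu : u = TensorProduct.assoc ℂ X Y R ((TensorProduct.assoc ℂ X Y R).symm u) :=
    ((TensorProduct.assoc ℂ X Y R).apply_symm_apply u).symm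
  set z := (TensorProduct.assoc ℂ X Y R).symm u with hz
  change extL (A.U Y t) (endTail a u)
      = endTail a (stepMid (A.U X s) (extL (A.U Y t) u))
  rw [hu]
  rw [P4 z, ← P2, ← P3, ← P4, P1]

end AuxPentagon

open MU in
/-- for two natural right absorbers `(ρ, U)` and `(ρ̌, Ǔ)` in the same
Hilbert space tensor category, with `U = Uᵖ` and `Ǔ = Ǔ^{ρ̌}` the associated
multiplicative unitaries and `V = U^{ρ̌}`, `W = Ǔᵖ`, the six pentagon-like
equations hold. -/
theorem two_absorbers_pentagonal_equations
    (C : HSTC.{u}) {R R' : Type u}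
    [AddCommGroup R] [Module ℂ R] [AddCommGroup R'] [Module ℂ R']
    (A : NRA C R) (B : NRA C R') :
    letI U : (R ⊗[ℂ] R) ≃ₗ[ℂ] (R ⊗[ℂ] R) := A.U R A.sρ
    letI Uc : (R' ⊗[ℂ] R') ≃ₗ[ℂ] (R' ⊗[ℂ] R') := B.U R' B.sρ
    letI V : (R' ⊗[ℂ] R) ≃ₗ[ℂ] (R' ⊗[ℂ] R) := A.U R' B.sρ
    letI W : (R ⊗[ℂ] R') ≃ₗ[ℂ] (R ⊗[ℂ] R') := B.U R A.sρ
    -- U₂₃ V₁₂ = V₁₂ V₁₃ U₂₃ on Ȟ ⊗ H ⊗ H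
    (extL U * endTail V = endTail V * stepMid V * extL U)
    -- Ǔ₂₃ W₁₂ = W₁₂ W₁₃ Ǔ₂₃ on H ⊗ Ȟ ⊗ Ȟ
    ∧ (extL Uc * endTail W = endTail W * stepMid W * extL Uc)
    -- V₂₃ Ǔ₁₂ = Ǔ₁₂ V₁₃ V₂₃ on Ȟ ⊗ Ȟ ⊗ H
    ∧ (extL V * endTail Uc = endTail Uc * stepMid V * extL V)
    -- W₂₃ U₁₂ = U₁₂ W₁₃ W₂₃ on H ⊗ H ⊗ Ȟ
    ∧ (extL W * endTail U = endTail U * stepMid W * extL W)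
    -- V₂₃ W₁₂ = W₁₂ U₁₃ V₂₃ on H ⊗ Ȟ ⊗ H
    ∧ (extL V * endTail W = endTail W * stepMid U * extL V)
    -- W₂₃ V₁₂ = V₁₂ Ǔ₁₃ W₂₃ on Ȟ ⊗ H ⊗ Ȟ
    ∧ (extL W * endTail V = endTail V * stepMid Uc * extL W) :=
  ⟨A.pent B.sρ A.sρ (A.U R' B.sρ) (A.U_isHom R' B.sρ),
   B.pent A.sρ B.sρ (B.U R A.sρ) (B.U_isHom R A.sρ),
   A.pent B.sρ B.sρ (B.U R' B.sρ) (B.U_isHom R' B.sρ),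
   B.pent A.sρ A.sρ (A.U R A.sρ) (A.U_isHom R A.sρ),
   A.pent A.sρ B.sρ (B.U R A.sρ) (B.U_isHom R A.sρ),
   B.pent B.sρ A.sρ (A.U R' B.sρ) (A.U_isHom R' B.sρ)⟩
end
end

section
/- Let (ρ, U) be a natural right absorber in C and y an object of C. Then ρ⊗y together with the unitaries U^x ⊗ id_y is again a natural right absorber, and its associated multiplicative unitary on (H^ρ⊗H^y)⊗(H^ρ⊗H^y) equals U^ρ₁₃ U^y₂₃ (legs numbered in H^ρ⊗H^y⊗H^ρ⊗H^y). -/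
noncomputable section
open scoped TensorProduct

universe u

set_option maxHeartbeats 1000000 in
open MU in
private lemma MU.aux_endTail_coe {A B R : Type*}
    [AddCommMonoid A] [Module ℂ A] [AddCommMonoid B] [Module ℂ B]
    [AddCommMonoid R] [Module ℂ R] (T : (A ⊗[ℂ] B) ≃ₗ[ℂ] (A ⊗[ℂ] B)) :
    (endTail (R := R) T).toLinearMap =
      (TensorProduct.assoc ℂ A B R).toLinearMap ∘ₗ
        TensorProduct.map T.toLinearMap LinearMap.id ∘ₗ
        ((TensorProduct.assoc ℂ A B R).symm :
          A ⊗[ℂ] (B ⊗[ℂ] R) →ₗ[ℂ] (A ⊗[ℂ] B) ⊗[ℂ] R) := rfl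

private lemma MU.aux_mapTail {X X' R Y : Type*}
    [AddCommMonoid X] [Module ℂ X] [AddCommMonoid X'] [Module ℂ X']
    [AddCommMonoid R] [Module ℂ R] [AddCommMonoid Y] [Module ℂ Y]
    (a : X →ₗ[ℂ] X') (z : X ⊗[ℂ] R) (y : Y) :
    TensorProduct.map a (LinearMap.id (R := ℂ) (M := R ⊗[ℂ] Y))
        ((TensorProduct.assoc ℂ X R Y) (z ⊗ₜ[ℂ] y))
      = (TensorProduct.assoc ℂ X' R Y)
          ((TensorProduct.map a (LinearMap.id (R := ℂ) (M := R)) z) ⊗ₜ[ℂ] y) := by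
  induction z using TensorProduct.induction_on with
  | zero => simp
  | tmul x r => simp
  | add p q hp hq => simp only [map_add, TensorProduct.add_tmul, hp, hq]

set_option maxHeartbeats 1000000 in
open MU in
private lemma MU.aux_shuffle {X X' R Y : Type*}
    [AddCommMonoid X] [Module ℂ X] [AddCommMonoid X'] [Module ℂ X']
    [AddCommMonoid R] [Module ℂ R] [AddCommMonoid Y] [Module ℂ Y]
    (u : (X ⊗[ℂ] R) ≃ₗ[ℂ] (X ⊗[ℂ] R)) (u' : (X' ⊗[ℂ] R) ≃ₗ[ℂ] (X' ⊗[ℂ] R)) :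
    endTail (R := Y)
        (TensorProduct.assoc ℂ X X' R ≪≫ₗ extL u' ≪≫ₗ stepMid u ≪≫ₗ
          (TensorProduct.assoc ℂ X X' R).symm)
      = TensorProduct.assoc ℂ X X' (R ⊗[ℂ] Y) ≪≫ₗ extL (endTail u')
          ≪≫ₗ stepMid (endTail u)
          ≪≫ₗ (TensorProduct.assoc ℂ X X' (R ⊗[ℂ] Y)).symm := by
  apply LinearEquiv.toLinearMap_injective
  apply TensorProduct.ext_fourfold'
  intro x x' r y
  simp only [endTail, stepMid, extL, exch, LinearEquiv.trans_apply, LinearEquiv.coe_coe,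
    LinearEquiv.coe_trans, LinearMap.coe_comp, Function.comp_apply,
    TensorProduct.congr_tmul, TensorProduct.assoc_tmul, TensorProduct.assoc_symm_tmul,
    TensorProduct.comm_tmul, LinearEquiv.refl_apply]
  induction u' (x' ⊗ₜ[ℂ] r) using TensorProduct.induction_on with
  | zero => simp
  | tmul a b =>
    simp only [endTail, LinearEquiv.trans_apply, TensorProduct.assoc_symm_tmul,
      TensorProduct.congr_tmul, TensorProduct.comm_tmul, LinearEquiv.refl_apply,
      TensorProduct.assoc_tmul, map_zero]
    induction u (x ⊗ₜ[ℂ] b) using TensorProduct.induction_on with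
    | zero => simp
    | tmul c d =>
      simp [TensorProduct.assoc_symm_tmul, TensorProduct.congr_tmul,
        TensorProduct.comm_tmul, TensorProduct.assoc_tmul]
    | add p q hp hq =>
      simp only [map_add, TensorProduct.add_tmul, TensorProduct.tmul_add]
      rw [hp, hq]
  | add p q hp hq =>
    simp only [map_add, TensorProduct.add_tmul, TensorProduct.tmul_add]
    rw [hp, hq]

open MU in
/-- if `(ρ, U)` is a natural right absorber in `C` and `y = (Y, t)` is an
object of `C`, then `ρ ⊗ y` together with the unitaries `Ǔˣ := Uˣ ⊗ id_y` is again a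
natural right absorber (each `Ǔˣ` is an arrow, natural, multiplicative), and the
multiplicative unitary associated to it equals `Uᵖ₁₃ U^y₂₃` on
`(Hᵖ ⊗ H^y) ⊗ (Hᵖ ⊗ H^y)`. -/
theorem absorber_tensor_object
    (C : HSTC.{u}) {R Y : Type u}
    [AddCommGroup R] [Module ℂ R] [AddCommGroup Y] [Module ℂ Y]
    (A : NRA C R) (t : C.S Y) :
    -- the candidate family `Ǔˣ = Uˣ ⊗ id_Y`, as an operator on `X ⊗ (R ⊗ Y)`,
    -- is `endTail (A.U X s)`; it is a natural right absorber for `ρ ⊗ y`: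
    -- (1) each `Ǔˣ` is an arrow `x ⊗ (ρ ⊗ y) → τ(x) ⊗ (ρ ⊗ y)` in `C`
    (∀ (X : Type u) [AddCommGroup X] [Module ℂ X] (s : C.S X),
      C.IsHom (C.tenS s (C.tenS A.sρ t)) (C.tenS (C.triv X) (C.tenS A.sρ t))
        (endTail (A.U X s)).toLinearMap)
    -- (2) naturality
    ∧ (∀ (X X' : Type u) [AddCommGroup X] [Module ℂ X] [AddCommGroup X'] [Module ℂ X']
        (s : C.S X) (s' : C.S X') (a : X →ₗ[ℂ] X'), C.IsHom s s' a →
        TensorProduct.map a (LinearMap.id (R := ℂ) (M := R ⊗[ℂ] Y)) ∘ₗ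
            (endTail (A.U X s)).toLinearMap
          = (endTail (A.U X' s')).toLinearMap ∘ₗ
              TensorProduct.map a (LinearMap.id (R := ℂ) (M := R ⊗[ℂ] Y)))
    -- (3) multiplicativity
    ∧ (∀ (X X' : Type u) [AddCommGroup X] [Module ℂ X] [AddCommGroup X'] [Module ℂ X']
        (s : C.S X) (s' : C.S X'),
        endTail (A.U (X ⊗[ℂ] X') (C.tenS s s'))
          = TensorProduct.assoc ℂ X X' (R ⊗[ℂ] Y) ≪≫ₗ extL (endTail (A.U X' s'))
              ≪≫ₗ stepMid (endTail (A.U X s))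
              ≪≫ₗ (TensorProduct.assoc ℂ X X' (R ⊗[ℂ] Y)).symm)
    -- (4) the associated multiplicative unitary is `Uᵖ₁₃ U^y₂₃`
    ∧ (endTail (A.U (R ⊗[ℂ] Y) (C.tenS A.sρ t))
        = TensorProduct.assoc ℂ R Y (R ⊗[ℂ] Y) ≪≫ₗ extL (endTail (A.U Y t))
            ≪≫ₗ stepMid (endTail (A.U R A.sρ))
            ≪≫ₗ (TensorProduct.assoc ℂ R Y (R ⊗[ℂ] Y)).symm) := by
  refine ⟨?_, ?_, ?_, ?_⟩
  · intro X _ _ s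
    rw [MU.aux_endTail_coe]
    exact C.isHom_comp _ _ _ _ _
      (C.isHom_comp _ _ _ _ _ (C.assoc_symm_isHom s A.sρ t)
        (C.ten_isHom _ _ _ _ _ _ (A.U_isHom X s) (C.isHom_id t)))
      (C.assoc_isHom (C.triv X) A.sρ t)
  · intro X X' _ _ _ _ s s' a ha
    have h := A.U_natural s s' a ha
    apply TensorProduct.ext'
    intro x z
    induction z using TensorProduct.induction_on with
    | zero => simp
    | tmul r y =>
      have hx : TensorProduct.map a (LinearMap.id (R := ℂ) (M := R))
            ((A.U X s) (x ⊗ₜ[ℂ] r)) = (A.U X' s') (a x ⊗ₜ[ℂ] r) := by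
        have := LinearMap.congr_fun h (x ⊗ₜ[ℂ] r)
        simpa using this
      simp only [LinearMap.coe_comp, Function.comp_apply, LinearEquiv.coe_coe,
        endTail, LinearEquiv.trans_apply, TensorProduct.assoc_symm_tmul,
        TensorProduct.congr_tmul, LinearEquiv.refl_apply, TensorProduct.map_tmul,
        LinearMap.id_coe, id_eq]
      rw [MU.aux_mapTail, hx]
    | add p q hp hq =>
      simp only [TensorProduct.tmul_add, map_add] at hp hq ⊢
      rw [hp, hq]
  · intro X X' _ _ _ _ s s'
    rw [A.U_mult X X' s s']
    exact MU.aux_shuffle (A.U X s) (A.U X' s')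
  · rw [A.U_mult R Y A.sρ t]
    exact MU.aux_shuffle (A.U R A.sρ) (A.U Y t)
end
end
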